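/- arXiv:2306.00094 — 2 statements merged into one kernel-verified Lean document; each statement's English description precedes it below -/
import Mathlib

section
/- Let D ⊆ ℝ^d be a measurable set, D_1, …, D_K measurable subsets of D, and γ : ℝ^d × ℝ^d → ℝ a measurable function such that for all x, y ∈ D with γ(x,y) ≠ 0 there exists k with x ∈ D_k and y ∈ D_k. Define ζ(x,y) = Σ_{k=1}^K χ_{D_k}(x) χ_{D_k}(y). Let u, v : ℝ^d → ℝ be measurable functions such that (x,y) ↦ (u(y) − u(x))(v(y) − v(x)) γ(x,y) is integrable on D × D. Then the sum of the weighted subdomain bilinear forms equals the global bilinear form: Σ_{k=1}^K ∫_{D_k} ∫_{D_k} (u(y) − u(x))(v(y) − v(x)) γ(x,y) ζ(x,y)^{-1} dy dx = ∫_D ∫_D (u(y) − u(x))(v(y) − v(x)) γ(x,y) dy dx. -/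
open MeasureTheory

/-- **Equivalence of the sum of weighted subdomain bilinear forms with the global
bilinear form.** If the subsets `D_1, …, D_K` of `D ⊆ ℝ^d` cover the support of the
kernel `γ` in `D × D` and `ζ(x,y) = ∑ k χ_{D_k}(x) χ_{D_k}(y)` is the counting
function, then
`∑ k ∫_{D_k} ∫_{D_k} (u(y)−u(x))(v(y)−v(x)) γ(x,y) ζ(x,y)⁻¹ dy dx
  = ∫_D ∫_D (u(y)−u(x))(v(y)−v(x)) γ(x,y) dy dx`. -/
theorem sum_weighted_subdomain_bilinear_forms_eq_global {d : ℕ} (K : ℕ)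
    (D : Set (Fin d → ℝ)) (hD : MeasurableSet D)
    (Dk : Fin K → Set (Fin d → ℝ)) (hDkm : ∀ k, MeasurableSet (Dk k))
    (hDk : ∀ k, Dk k ⊆ D)
    (γ : (Fin d → ℝ) → (Fin d → ℝ) → ℝ) (hγ : Measurable (Function.uncurry γ))
    (hcover : ∀ x y, x ∈ D → y ∈ D → γ x y ≠ 0 → ∃ k, x ∈ Dk k ∧ y ∈ Dk k)
    (u v : (Fin d → ℝ) → ℝ) (hu : Measurable u) (hv : Measurable v)
    (hint : IntegrableOn
      (fun p : (Fin d → ℝ) × (Fin d → ℝ) =>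
        (u p.2 - u p.1) * (v p.2 - v p.1) * γ p.1 p.2) (D ×ˢ D))
    (ζ : (Fin d → ℝ) → (Fin d → ℝ) → ℝ)
    (hζ : ∀ x y, ζ x y = ∑ k : Fin K,
      (Dk k).indicator (fun _ => (1 : ℝ)) x * (Dk k).indicator (fun _ => (1 : ℝ)) y) :
    ∑ k : Fin K, ∫ x in Dk k, ∫ y in Dk k,
        (u y - u x) * (v y - v x) * γ x y * (ζ x y)⁻¹
      = ∫ x in D, ∫ y in D, (u y - u x) * (v y - v x) * γ x y := by
  classical
  set f : (Fin d → ℝ) × (Fin d → ℝ) → ℝ :=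
    fun p => (u p.2 - u p.1) * (v p.2 - v p.1) * γ p.1 p.2 with hf
  set g : (Fin d → ℝ) × (Fin d → ℝ) → ℝ :=
    fun p => f p * (ζ p.1 p.2)⁻¹ with hg
  -- measurability of f
  have hfm : Measurable f := by
    exact (((hu.comp measurable_snd).sub (hu.comp measurable_fst)).mul
      ((hv.comp measurable_snd).sub (hv.comp measurable_fst))).mul hγ
  -- measurability of ζ as a function on the product
  have hζm : Measurable (fun p : (Fin d → ℝ) × (Fin d → ℝ) => ζ p.1 p.2) := by
    have h1 : (fun p : (Fin d → ℝ) × (Fin d → ℝ) => ζ p.1 p.2) =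
        fun p => ∑ k : Fin K, (Dk k).indicator (fun _ => (1 : ℝ)) p.1 *
          (Dk k).indicator (fun _ => (1 : ℝ)) p.2 := funext fun p => hζ p.1 p.2
    rw [h1]
    exact Finset.measurable_sum _ fun k _ =>
      ((measurable_const.indicator (hDkm k)).comp measurable_fst).mul
      ((measurable_const.indicator (hDkm k)).comp measurable_snd)
  have hgm : Measurable g := hfm.mul hζm.inv
  -- ζ is either 0 or at least 1
  have hζ01 : ∀ x y, ζ x y = 0 ∨ 1 ≤ ζ x y := by
    intro x y
    by_cases h : ∃ k, x ∈ Dk k ∧ y ∈ Dk k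
    · obtain ⟨k, hxk, hyk⟩ := h
      right
      rw [hζ x y]
      calc (1 : ℝ) = (Dk k).indicator (fun _ => (1 : ℝ)) x *
            (Dk k).indicator (fun _ => (1 : ℝ)) y := by
            simp [Set.indicator_of_mem, hxk, hyk]
        _ ≤ _ := Finset.single_le_sum
            (f := fun k => (Dk k).indicator (fun _ => (1 : ℝ)) x *
              (Dk k).indicator (fun _ => (1 : ℝ)) y)
            (fun j _ => mul_nonneg (Set.indicator_nonneg (fun _ _ => zero_le_one) _)
              (Set.indicator_nonneg (fun _ _ => zero_le_one) _)) (Finset.mem_univ k)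
    · left
      rw [hζ x y]
      apply Finset.sum_eq_zero
      intro k _
      push_neg at h
      by_cases hx : x ∈ Dk k
      · simp [Set.indicator_of_notMem (h k hx)]
      · simp [Set.indicator_of_notMem hx]
  -- |ζ⁻¹| ≤ 1 everywhere
  have hζinv : ∀ x y, |(ζ x y)⁻¹| ≤ 1 := by
    intro x y
    rcases hζ01 x y with h | h
    · simp [h]
    · have h0 : (0:ℝ) < ζ x y := lt_of_lt_of_le one_pos h
      rw [abs_of_nonneg (inv_nonneg.mpr h0.le)]
      exact inv_le_one_of_one_le₀ h
  -- integrability of g on each Dk k ×ˢ Dk k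
  have hgint : ∀ k, IntegrableOn g (Dk k ×ˢ Dk k) := by
    intro k
    have hfk : IntegrableOn f (Dk k ×ˢ Dk k) :=
      hint.mono_set (Set.prod_mono (hDk k) (hDk k))
    refine Integrable.mono hfk hgm.aestronglyMeasurable ?_
    filter_upwards with p
    simp only [hg, Real.norm_eq_abs, abs_mul]
    calc |f p| * |(ζ p.1 p.2)⁻¹| ≤ |f p| * 1 :=
          mul_le_mul_of_nonneg_left (hζinv p.1 p.2) (abs_nonneg _)
      _ = |f p| := mul_one _
  -- rewrite iterated integrals as product integrals
  have hLHS : ∀ k, (∫ x in Dk k, ∫ y in Dk k,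
      (u y - u x) * (v y - v x) * γ x y * (ζ x y)⁻¹)
      = ∫ p in (Dk k ×ˢ Dk k), g p := by
    intro k
    exact (setIntegral_prod g (hgint k)).symm
  have hRHS : (∫ x in D, ∫ y in D, (u y - u x) * (v y - v x) * γ x y)
      = ∫ p in (D ×ˢ D), f p := (setIntegral_prod f hint).symm
  simp only [hLHS, hRHS]
  -- pointwise identity of indicators
  have hpt : ∀ p : (Fin d → ℝ) × (Fin d → ℝ),
      ∑ k : Fin K, (Dk k ×ˢ Dk k).indicator g p = (D ×ˢ D).indicator f p := by
    intro p
    by_cases hp : p ∈ D ×ˢ D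
    · by_cases hγ0 : γ p.1 p.2 = 0
      · have hf0 : f p = 0 := by simp [hf, hγ0]
        have hg0 : g p = 0 := by simp [hg, hf0]
        simp [Set.indicator_apply, hf0, hg0]
      · have hx1 : p.1 ∈ D := hp.1
        have hx2 : p.2 ∈ D := hp.2
        have hζne : ζ p.1 p.2 ≠ 0 := by
          rcases hζ01 p.1 p.2 with h | h
          · exfalso
            obtain ⟨k, hk1, hk2⟩ := hcover p.1 p.2 hx1 hx2 hγ0
            rw [hζ p.1 p.2] at h
            have h1 : (1:ℝ) ≤ 0 := by
              calc (1:ℝ) = (Dk k).indicator (fun _ => (1 : ℝ)) p.1 *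
                    (Dk k).indicator (fun _ => (1 : ℝ)) p.2 := by
                    simp [Set.indicator_of_mem, hk1, hk2]
                _ ≤ _ := Finset.single_le_sum
                    (f := fun k => (Dk k).indicator (fun _ => (1 : ℝ)) p.1 *
                      (Dk k).indicator (fun _ => (1 : ℝ)) p.2)
                    (fun j _ => mul_nonneg
                      (Set.indicator_nonneg (fun _ _ => zero_le_one) _)
                      (Set.indicator_nonneg (fun _ _ => zero_le_one) _))
                    (Finset.mem_univ k)
                _ = 0 := h
            linarith
          · exact ne_of_gt (lt_of_lt_of_le one_pos h)
        have hterm : ∀ k, (Dk k ×ˢ Dk k).indicator g p =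
            ((Dk k).indicator (fun _ => (1 : ℝ)) p.1 *
             (Dk k).indicator (fun _ => (1 : ℝ)) p.2) * g p := by
          intro k
          by_cases h1 : p.1 ∈ Dk k <;> by_cases h2 : p.2 ∈ Dk k <;>
            simp [Set.indicator_apply, Set.mem_prod, h1, h2]
        rw [Set.indicator_of_mem hp]
        rw [Finset.sum_congr rfl fun k _ => hterm k, ← Finset.sum_mul, ← hζ p.1 p.2]
        simp only [hg]
        field_simp
    · have : ∀ k, p ∉ Dk k ×ˢ Dk k := fun k hk =>
        hp (Set.prod_mono (hDk k) (hDk k) hk)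
      simp [Set.indicator_of_notMem, this, Set.indicator_of_notMem hp]
  -- swap sum and integral
  have hmeasD : MeasurableSet (D ×ˢ D) := hD.prod hD
  calc ∑ k : Fin K, ∫ p in (Dk k ×ˢ Dk k), g p
      = ∑ k : Fin K, ∫ p, (Dk k ×ˢ Dk k).indicator g p := by
        refine Finset.sum_congr rfl fun k _ => ?_
        rw [integral_indicator ((hDkm k).prod (hDkm k))]
    _ = ∫ p, ∑ k : Fin K, (Dk k ×ˢ Dk k).indicator g p := by
        rw [integral_finset_sum]
        intro k _
        exact (hgint k).integrable_indicator ((hDkm k).prod (hDkm k))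
    _ = ∫ p, (D ×ˢ D).indicator f p := by
        exact integral_congr_ae (Filter.Eventually.of_forall hpt)
    _ = ∫ p in (D ×ˢ D), f p := integral_indicator hmeasD
end

section
/- Let A be a real symmetric positive semi-definite n×n matrix whose null space is exactly the span of the all-ones vector 𝟙, i.e., A w = 0 if and only if w is a constant vector. Fix an index ℓ and define the modified matrix Ã by Ã_{m i} = A_{m i} for m ≠ ℓ and i ≠ ℓ, Ã_{ℓ ℓ} = 1, and Ã_{ℓ i} = Ã_{i ℓ} = 0 for i ≠ ℓ. Then Ã is symmetric positive definite; in particular Ã is invertible. -/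
open Matrix

/-- **Regularization of a floating-subdomain stiffness matrix by an artificial
Dirichlet condition.** Let `A` be real symmetric positive semi-definite with null
space exactly the span of the all-ones vector. Replacing the `ℓ`-th row and column
of `A` by the `ℓ`-th standard unit vector yields a symmetric positive definite
(hence invertible) matrix `Ã`. -/
theorem dirichlet_regularized_matrix_posDef {n : ℕ}
    (A : Matrix (Fin n) (Fin n) ℝ) (hpsd : A.PosSemidef)
    (hker : ∀ w : Fin n → ℝ, A.mulVec w = 0 ↔ ∃ c : ℝ, w = fun _ => c)
    (ℓ : Fin n) :
    (Matrix.of fun m i : Fin n =>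
      if m = ℓ then (if i = ℓ then (1 : ℝ) else 0)
      else (if i = ℓ then 0 else A m i)).PosDef := by
  have hAsymm : ∀ i j, A i j = A j i := by
    intro i j
    have := congrFun (congrFun hpsd.1 i) j
    simpa [conjTranspose_apply] using this.symm
  rw [posDef_iff_dotProduct_mulVec]
  constructor
  · ext i j
    simp only [conjTranspose_apply, of_apply, star_trivial]
    by_cases hi : i = ℓ <;> by_cases hj : j = ℓ <;> simp [hi, hj, hAsymm i j]
  · intro x hx
    set y : Fin n → ℝ := fun i => if i = ℓ then 0 else x i with hy
    have hyl : y ℓ = 0 := by simp [hy]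
    have key : star x ⬝ᵥ (Matrix.of fun m i : Fin n =>
        if m = ℓ then (if i = ℓ then (1 : ℝ) else 0)
        else (if i = ℓ then 0 else A m i)) *ᵥ x
        = x ℓ * x ℓ + y ⬝ᵥ A *ᵥ y := by
      simp only [star_trivial, dotProduct, mulVec, of_apply]
      rw [← Finset.add_sum_erase _ _ (Finset.mem_univ ℓ),
        ← Finset.add_sum_erase _ (fun m => y m * ∑ i, A m i * y i) (Finset.mem_univ ℓ),
        hyl, zero_mul, zero_add]
      congr 1
      · simp
      · refine Finset.sum_congr rfl fun m hm => ?_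
        have hmℓ : m ≠ ℓ := Finset.ne_of_mem_erase hm
        have hym : y m = x m := by simp [hy, hmℓ]
        rw [hym]
        congr 1
        refine Finset.sum_congr rfl fun i _ => ?_
        by_cases hi : i = ℓ <;> simp [hi, hmℓ, hy]
    rw [key]
    have h1 : 0 ≤ y ⬝ᵥ A *ᵥ y := by simpa using hpsd.dotProduct_mulVec_nonneg y
    rcases lt_or_eq_of_le (add_nonneg (mul_self_nonneg (x ℓ)) h1) with hlt | heq
    · exact hlt
    · exfalso
      have hxl : x ℓ * x ℓ = 0 ∧ y ⬝ᵥ A *ᵥ y = 0 :=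
        (add_eq_zero_iff_of_nonneg (mul_self_nonneg _) h1).mp heq.symm
      have hAy : A *ᵥ y = 0 := by
        have := (hpsd.dotProduct_mulVec_zero_iff y).mp (by simpa using hxl.2)
        exact this
      obtain ⟨c, hc⟩ := (hker y).mp hAy
      have hc0 : c = 0 := by
        have := congrFun hc ℓ
        rw [hyl] at this
        exact this.symm
      apply hx
      funext i
      by_cases hi : i = ℓ
      · subst hi
        exact mul_self_eq_zero.mp hxl.1
      · have := congrFun hc i
        simp [hy, hi, hc0] at this ⊢
        exact this
end
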